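/- For integers n ≥ m ≥ 0 with n-m even, R_n^m(x) = Σ'_{i=0, n-i even}^{n} c_{n,m,i} T_i(x), where c_{n,m,i} = (-1)^{(n-m)/2} Σ_{s=max(0,(i-m)/2)}^{(n-m)/2} (-1)^s C((n+m)/2+s, (n-m)/2-s) C(m+2s,s) 2^{1-m-2s} C(m+2s, (m+2s-i)/2), and the prime halves the i=0 term. -/

import Mathlib

open Finset

noncomputable def tI (j : ℤ) (x : ℝ) : ℝ := (Polynomial.Chebyshev.T ℝ j).eval x

lemma tI_congr {a b : ℤ} (h : a = b) (x : ℝ) : tI a x = tI b x := by rw [h]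

lemma tI_rec (m : ℤ) (x : ℝ) : 2 * x * tI m x = tI (m+1) x + tI (m-1) x := by
  have h := Polynomial.Chebyshev.T_add_two ℝ (m - 1)
  rw [show m - 1 + 2 = m + 1 by ring, show m - 1 + 1 = m by ring] at h
  simp only [tI, h, Polynomial.eval_sub, Polynomial.eval_mul, Polynomial.eval_ofNat,
    Polynomial.eval_X]
  ring

lemma key (k : ℕ) (x : ℝ) :
    (2:ℝ)^k * x^k = ∑ s ∈ range (k+1), (k.choose s : ℝ) * tI ((k:ℤ) - 2*s) x := by
  induction k with
  | zero => simp [tI, Polynomial.Chebyshev.T_zero]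
  | succ k ih =>
    have step : (2:ℝ)^(k+1) * x^(k+1)
        = (∑ s ∈ range (k+1), (k.choose s : ℝ) * tI ((k:ℤ) + 1 - 2*s) x)
        + (∑ s ∈ range (k+1), (k.choose s : ℝ) * tI ((k:ℤ) - 1 - 2*s) x) := by
      have h0 : (2:ℝ)^(k+1) * x^(k+1) = 2 * x * ((2:ℝ)^k * x^k) := by ring
      rw [h0, ih, Finset.mul_sum, ← Finset.sum_add_distrib]
      refine Finset.sum_congr rfl fun s _ => ?_
      have h := tI_rec ((k:ℤ) - 2*s) x
      rw [tI_congr (show (k:ℤ) - 2*s + 1 = (k:ℤ) + 1 - 2*s by ring),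
          tI_congr (show (k:ℤ) - 2*s - 1 = (k:ℤ) - 1 - 2*s by ring)] at h
      calc 2 * x * ((k.choose s : ℝ) * tI ((k:ℤ) - 2*s) x)
          = (k.choose s : ℝ) * (2 * x * tI ((k:ℤ) - 2*s) x) := by ring
        _ = _ := by rw [h]; ring
    rw [step]
    have hR : ∑ s ∈ range (k+2), ((k+1).choose s : ℝ) * tI ((k:ℤ) + 1 - 2*s) x
        = (∑ s ∈ range (k+1), ((k+1).choose (s+1) : ℝ) * tI ((k:ℤ) - 1 - 2*s) x)
          + tI ((k:ℤ)+1) x := by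
      rw [Finset.sum_range_succ']
      simp only [Nat.choose_zero_right, Nat.cast_one, one_mul, Nat.cast_ofNat,
        Nat.cast_zero, mul_zero, sub_zero]
      congr 1
      refine Finset.sum_congr rfl fun s _ => ?_
      rw [tI_congr (show (k:ℤ) + 1 - 2*(s+1:ℕ) = (k:ℤ) - 1 - 2*s by push_cast; ring)]
    have hS1 : ∑ s ∈ range (k+1), ((k).choose (s+1) : ℝ) * tI ((k:ℤ) - 1 - 2*s) x
        = (∑ s ∈ range (k+1), (k.choose s : ℝ) * tI ((k:ℤ) + 1 - 2*s) x) - tI ((k:ℤ)+1) x := by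
      have h2 : ∑ s ∈ range (k+2), (k.choose s : ℝ) * tI ((k:ℤ) + 1 - 2*s) x
          = (∑ s ∈ range (k+1), (k.choose (s+1) : ℝ) * tI ((k:ℤ) + 1 - 2*(s+1:ℕ)) x)
            + (k.choose 0 : ℝ) * tI ((k:ℤ)+1) x := by
        rw [Finset.sum_range_succ']
        norm_num
      have h3 : ∑ s ∈ range (k+2), (k.choose s : ℝ) * tI ((k:ℤ) + 1 - 2*s) x
          = ∑ s ∈ range (k+1), (k.choose s : ℝ) * tI ((k:ℤ) + 1 - 2*s) x := by
        rw [Finset.sum_range_succ, Nat.choose_succ_self]; simp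
      rw [h3] at h2
      have h4 : ∀ s ∈ range (k+1), (k.choose (s+1) : ℝ) * tI ((k:ℤ) + 1 - 2*(s+1:ℕ)) x
          = (k.choose (s+1) : ℝ) * tI ((k:ℤ) - 1 - 2*s) x := by
        intro s _
        rw [tI_congr (show (k:ℤ) + 1 - 2*(s+1:ℕ) = (k:ℤ) - 1 - 2*s by push_cast; ring)]
      rw [Finset.sum_congr rfl h4, Nat.choose_zero_right] at h2
      push_cast at h2 ⊢
      linarith
    have hcast : ∀ s ∈ range (k+2), (((k+1).choose s : ℕ) : ℝ) * tI (((k+1:ℕ):ℤ) - 2*s) x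
        = ((k+1).choose s : ℝ) * tI ((k:ℤ) + 1 - 2*s) x := by
      intro s _
      rw [tI_congr (show (((k+1:ℕ)):ℤ) - 2*s = (k:ℤ) + 1 - 2*s by push_cast; ring)]
    rw [show (k+1) + 1 = k + 2 from rfl, Finset.sum_congr rfl hcast, hR]
    have hpascal : ∀ s ∈ range (k+1), (((k+1).choose (s+1) : ℕ) : ℝ) * tI ((k:ℤ) - 1 - 2*s) x
        = (k.choose s : ℝ) * tI ((k:ℤ) - 1 - 2*s) x + (k.choose (s+1) : ℝ) * tI ((k:ℤ) - 1 - 2*s) x := by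
      intro s _
      rw [Nat.choose_succ_succ']
      push_cast; ring
    rw [Finset.sum_congr rfl hpascal, Finset.sum_add_distrib, hS1]
    ring

lemma tI_neg (j : ℤ) (x : ℝ) : tI (-j) x = tI j x := by
  simp only [tI, Polynomial.Chebyshev.T_neg]

lemma chebFold (k : ℕ) (x : ℝ) :
    ∑ t ∈ range (k+1), (k.choose t : ℝ) * tI ((k:ℤ) - 2*t) x
    = ∑ i ∈ range (k+1), if (k - i) % 2 = 0 then
        (if i = 0 then (1:ℝ) else 2) * (k.choose ((k-i)/2) : ℝ) * tI (i:ℤ) x else 0 := by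
  rw [← Finset.sum_fiberwise_of_maps_to (s := range (k+1)) (t := range (k+1))
    (g := fun t => ((k:ℤ) - 2*t).natAbs)
    (fun t ht => by simp only [mem_range] at *; omega)
    (fun t => (k.choose t : ℝ) * tI ((k:ℤ) - 2*t) x)]
  refine Finset.sum_congr rfl fun i hi => ?_
  simp only [mem_range] at hi
  by_cases hp : (k - i) % 2 = 0
  · rw [if_pos hp]
    by_cases h0 : i = 0
    · subst h0
      have hfe : (range (k+1)).filter (fun t : ℕ => ((k:ℤ) - 2*(t:ℤ)).natAbs = 0) = {k/2} := by
        ext t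
        simp only [mem_filter, mem_range, mem_singleton]
        omega
      rw [hfe, Finset.sum_singleton, if_pos rfl, one_mul,
        tI_congr (show (k:ℤ) - 2*((k/2 : ℕ):ℤ) = ((0:ℕ):ℤ) by omega)]
      norm_num
    · have hfe : (range (k+1)).filter (fun t : ℕ => ((k:ℤ) - 2*(t:ℤ)).natAbs = i)
          = {(k-i)/2, (k+i)/2} := by
        ext t
        simp only [mem_filter, mem_range, mem_insert, mem_singleton]
        omega
      rw [hfe, Finset.sum_pair (by omega), if_neg h0,
        tI_congr (show (k:ℤ) - 2*(((k-i)/2 : ℕ):ℤ) = (i:ℤ) by omega),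
        tI_congr (show (k:ℤ) - 2*(((k+i)/2 : ℕ):ℤ) = (-(i:ℤ)) by omega),
        tI_neg,
        show k.choose ((k+i)/2) = k.choose ((k-i)/2) by
          have h1 : (k-i)/2 = k - (k+i)/2 := by omega
          rw [h1, Nat.choose_symm (show (k+i)/2 ≤ k by omega)]]
      ring
  · rw [if_neg hp]
    rw [Finset.filter_false_of_mem (fun t ht => by simp only [mem_range] at ht; omega),
      Finset.sum_empty]

lemma pow_eq (k : ℕ) (x : ℝ) :
    x ^ k = ∑ i ∈ range (k+1), if (k - i) % 2 = 0 then
      (if i = 0 then (1:ℝ)/2 else 1) * (2:ℝ)^((1:ℤ) - k) * (k.choose ((k-i)/2) : ℝ) * tI (i:ℤ) x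
      else 0 := by
  have h2 : (2:ℝ)^((1:ℤ) - k) = 2 / 2^k := by
    rw [zpow_sub₀ (by norm_num : (2:ℝ) ≠ 0), zpow_one, zpow_natCast]
  have hk : x ^ k = (2^k)⁻¹ * ((2:ℝ)^k * x^k) := by
    field_simp
  rw [hk, key, chebFold, Finset.mul_sum]
  refine Finset.sum_congr rfl fun i _ => ?_
  split_ifs with h1 h0 <;> simp [h2] <;> ring

noncomputable def T (i : ℕ) (x : ℝ) : ℝ := (Polynomial.Chebyshev.T ℝ i).eval x

noncomputable def R (n m : ℕ) (x : ℝ) : ℝ :=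
  (-1 : ℝ) ^ ((n - m) / 2) * x ^ m *
    ∑ s ∈ Finset.range ((n - m) / 2 + 1),
      (((n + m) / 2 + s).choose ((n - m) / 2 - s) : ℝ) * ((m + 2 * s).choose s : ℝ) *
        (-x ^ 2) ^ s

noncomputable def c (n m i : ℕ) : ℝ :=
  (-1 : ℝ) ^ ((n - m) / 2) *
    ∑ s ∈ Finset.Icc ((i - m) / 2) ((n - m) / 2),
      (-1 : ℝ) ^ s * (((n + m) / 2 + s).choose ((n - m) / 2 - s) : ℝ) *
        ((m + 2 * s).choose s : ℝ) * (2 : ℝ) ^ ((1 : ℤ) - m - 2 * s) *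
        ((m + 2 * s).choose ((m + 2 * s - i) / 2) : ℝ)

theorem zernike_chebyshev_expansion (n m : ℕ) (hmn : m ≤ n) (hpar : Even (n - m)) (x : ℝ) :
    R n m x = ∑ i ∈ Finset.range (n + 1),
      if (n - i) % 2 = 0 then
        (if i = 0 then (1 : ℝ) / 2 else 1) * c n m i * T i x
      else 0 := by
  obtain ⟨h, rfl⟩ : ∃ h, n = m + 2 * h := by
    rcases hpar with ⟨j, hj⟩; exact ⟨j, by omega⟩
  have e1 : (m + 2*h - m)/2 = h := by omega
  have e2 : (m + 2*h + m)/2 = m + h := by omega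
  have hG : ∀ i ∈ range (m + 2*h + 1),
      (if (m + 2*h - i) % 2 = 0 then
        (if i = 0 then (1 : ℝ) / 2 else 1) * c (m + 2*h) m i * T i x else 0)
      = ∑ s ∈ range (h+1),
          (if (m + 2*h - i) % 2 = 0 then
            (if (i - m)/2 ≤ s then
              (if i = 0 then (1:ℝ)/2 else 1) *
                ((-1:ℝ)^h * ((-1:ℝ)^s * ((m+h+s).choose (h-s) : ℝ) * ((m+2*s).choose s : ℝ) *
                  (2:ℝ)^((1:ℤ) - m - 2*s) * ((m+2*s).choose ((m+2*s-i)/2) : ℝ)) * T i x)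
              else 0)
            else 0) := by
    intro i _
    by_cases hp : (m + 2*h - i) % 2 = 0
    · simp only [if_pos hp]
      have hicc : Finset.Icc ((i-m)/2) h = (range (h+1)).filter (fun s => (i-m)/2 ≤ s) := by
        ext s; simp only [mem_Icc, mem_filter, mem_range]; omega
      simp only [c, e1, e2]
      rw [hicc, Finset.sum_filter, Finset.mul_sum, Finset.mul_sum, Finset.sum_mul]
      refine Finset.sum_congr rfl fun s _ => ?_
      split_ifs <;> ring
    · simp [hp]
  rw [Finset.sum_congr rfl hG, Finset.sum_comm]
  have hL : R (m + 2*h) m x = ∑ s ∈ range (h+1),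
      ((-1:ℝ)^h * ((-1:ℝ)^s * ((m+h+s).choose (h-s) : ℝ) * ((m+2*s).choose s : ℝ))) *
        x^(m+2*s) := by
    simp only [R, e1, e2]
    rw [Finset.mul_sum]
    refine Finset.sum_congr rfl fun s _ => ?_
    ring
  rw [hL]
  refine Finset.sum_congr rfl fun s hs => ?_
  simp only [mem_range] at hs
  rw [pow_eq (m+2*s) x, Finset.mul_sum]
  have hsplit : range (m + 2*h + 1)
      = range (m + 2*s + 1) ∪ Finset.Ico (m + 2*s + 1) (m + 2*h + 1) := by
    rw [Finset.range_eq_Ico, Finset.range_eq_Ico]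
    rw [Finset.Ico_union_Ico_eq_Ico (a := 0) (b := m + 2*s + 1) (c := m + 2*h + 1) (by omega) (by omega)]
  rw [hsplit, Finset.sum_union (by
    simp only [Finset.range_eq_Ico]
    exact Finset.Ico_disjoint_Ico_consecutive 0 (m+2*s+1) (m+2*h+1))]
  have hzero : ∀ i ∈ Finset.Ico (m+2*s+1) (m+2*h+1),
      (if (m + 2*h - i) % 2 = 0 then
            (if (i - m)/2 ≤ s then
              (if i = 0 then (1:ℝ)/2 else 1) *
                ((-1:ℝ)^h * ((-1:ℝ)^s * ((m+h+s).choose (h-s) : ℝ) * ((m+2*s).choose s : ℝ) *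
                  (2:ℝ)^((1:ℤ) - m - 2*s) * ((m+2*s).choose ((m+2*s-i)/2) : ℝ)) * T i x)
              else 0)
            else 0) = 0 := by
    intro i hi
    simp only [mem_Ico] at hi
    split_ifs <;> first | rfl | (exfalso; omega)
  rw [Finset.sum_congr rfl hzero, Finset.sum_const_zero, add_zero]
  refine Finset.sum_congr rfl fun i hi => ?_
  simp only [mem_range] at hi
  have harg : (2:ℝ)^((1:ℤ) - (m+2*s : ℕ)) = (2:ℝ)^((1:ℤ) - m - 2*s) := by
    congr 1; push_cast; ring
  have hTt : T i x = tI (i:ℤ) x := rfl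
  rw [harg, hTt]
  have hpeq : (m + 2*s - i) % 2 = (m + 2*h - i) % 2 := by omega
  rw [hpeq]
  split_ifs <;> first | (exfalso; omega) | ring1 | simp
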